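/- For a permutation σ of {1,...,k} satisfying σ(i) ≤ i+1 for all i, the signature of σ equals (-1)^N where N is the number of indices i with σ(i) = i+1. -/
import Mathlib

lemma perm_le_id {k : ℕ} (σ : Equiv.Perm (Fin k)) (h : ∀ i : Fin k, (σ i : ℕ) ≤ (i : ℕ)) :
    σ = 1 := by
  have key : ∀ n : ℕ, ∀ i : Fin k, (i : ℕ) = n → σ i = i := by
    intro n
    induction n using Nat.strong_induction_on with
    | _ n ih =>
      intro i hi
      have h1 : (σ i : ℕ) ≤ (i : ℕ) := h i
      rcases lt_or_eq_of_le h1 with hlt | heq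
      · exfalso
        have h2 : σ (σ i) = σ i := ih (σ i) (hi ▸ hlt) (σ i) rfl
        have h3 : σ i = i := σ.injective h2
        rw [h3] at hlt
        exact lt_irrefl _ hlt
      · exact Fin.ext heq
  ext i
  simp [key (i : ℕ) i rfl]

lemma main_aux : ∀ n k : ℕ, ∀ σ : Equiv.Perm (Fin k),
    (∀ i : Fin k, (σ i : ℕ) ≤ (i : ℕ) + 1) →
    (Finset.univ.filter (fun i : Fin k => (σ i : ℕ) = (i : ℕ) + 1)).card = n →
    Equiv.Perm.sign σ = (-1) ^ n := by
  intro n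
  induction n with
  | zero =>
    intro k σ h hc
    have hid : σ = 1 := by
      apply perm_le_id
      intro i
      have h1 := h i
      have h2 : (σ i : ℕ) ≠ (i : ℕ) + 1 := by
        intro he
        have : i ∈ Finset.univ.filter (fun i : Fin k => (σ i : ℕ) = (i : ℕ) + 1) := by
          simp [he]
        rw [Finset.card_eq_zero.mp hc] at this
        simp at this
      omega
    simp [hid]
  | succ n ih =>
    intro k σ h hc
    set s := Finset.univ.filter (fun i : Fin k => (σ i : ℕ) = (i : ℕ) + 1) with hs
    have hne : s.Nonempty := Finset.card_pos.mp (hc ▸ n.succ_pos)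
    set j := s.max' hne with hjdef
    have hj : (σ j : ℕ) = (j : ℕ) + 1 := (Finset.mem_filter.mp (s.max'_mem hne)).2
    have hjk : (j : ℕ) + 1 < k := hj ▸ (σ j).isLt
    set j1 : Fin k := ⟨(j : ℕ) + 1, hjk⟩ with hj1def
    have hjne : j ≠ j1 := by
      intro he
      have : (j : ℕ) = (j : ℕ) + 1 := congrArg Fin.val he
      omega
    -- σ j1 is not non-standard (by maximality of j)
    have hmax : (σ j1 : ℕ) ≠ (j1 : ℕ) + 1 := by
      intro he
      have hmem : j1 ∈ s := by simp [hs, he]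
      have := s.le_max' j1 hmem
      rw [← hjdef] at this
      have : (j1 : ℕ) ≤ (j : ℕ) := this
      simp [hj1def] at this
    have hne1 : σ j1 ≠ σ j := fun he => hjne (σ.injective he).symm
    have hle1 : (σ j1 : ℕ) ≤ (j : ℕ) + 1 := by
      have h5 := h j1
      have hv : (j1 : ℕ) = (j : ℕ) + 1 := rfl
      omega
    have hlt1 : (σ j1 : ℕ) < (j : ℕ) + 1 := by
      rcases lt_or_eq_of_le hle1 with h' | h'
      · exact h'
      · exfalso; apply hne1; apply Fin.ext; rw [h', hj]
    set σ' := σ * Equiv.swap j j1 with hσ'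
    have hσ'j : σ' j = σ j1 := by simp [hσ', Equiv.swap_apply_left]
    have hσ'j1 : σ' j1 = σ j := by simp [hσ', Equiv.swap_apply_right]
    have hσ'other : ∀ i : Fin k, i ≠ j → i ≠ j1 → σ' i = σ i := by
      intro i h1 h2
      simp [hσ', Equiv.swap_apply_of_ne_of_ne h1 h2]
    have hhyp : ∀ i : Fin k, (σ' i : ℕ) ≤ (i : ℕ) + 1 := by
      intro i
      by_cases h1 : i = j
      · subst h1; rw [hσ'j]; omega
      · by_cases h2 : i = j1
        · subst h2; rw [hσ'j1, hj]; simp [hj1def]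
        · rw [hσ'other i h1 h2]; exact h i
    have hfilter : Finset.univ.filter (fun i : Fin k => (σ' i : ℕ) = (i : ℕ) + 1)
        = s.erase j := by
      ext i
      simp only [Finset.mem_filter, Finset.mem_univ, true_and, Finset.mem_erase, hs]
      by_cases h1 : i = j
      · subst h1
        rw [hσ'j]
        simp only [ne_eq, not_true_eq_false, false_and, iff_false]
        omega
      · by_cases h2 : i = j1
        · subst h2
          rw [hσ'j1, hj]
          have hv : (j1 : ℕ) = (j : ℕ) + 1 := rfl
          constructor
          · intro he; omega
          · intro he
            exact absurd he.2 hmax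
        · rw [hσ'other i h1 h2]
          simp [h1]
    have hcard : (Finset.univ.filter (fun i : Fin k => (σ' i : ℕ) = (i : ℕ) + 1)).card = n := by
      rw [hfilter, Finset.card_erase_of_mem (s.max'_mem hne), hc]
      omega
    have hsign' : Equiv.Perm.sign σ' = (-1) ^ n := ih k σ' hhyp hcard
    have : Equiv.Perm.sign σ' = Equiv.Perm.sign σ * (-1) := by
      rw [hσ', map_mul, Equiv.Perm.sign_swap hjne]
    rw [this] at hsign'
    have : Equiv.Perm.sign σ = (-1) ^ n * (-1) := by
      have h4 : Equiv.Perm.sign σ * (-1) * (-1) = (-1) ^ n * (-1) := by rw [hsign']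
      simpa using h4
    rw [this, pow_succ]

/-- For a permutation `σ` of `{1,...,k}` with `σ(i) ≤ i + 1` for all `i`, the signature of
`σ` equals `(-1) ^ N` where `N` is the number of indices `i` with `σ(i) = i + 1`. -/
theorem stmt1 (k : ℕ) (σ : Equiv.Perm (Fin k))
    (hσ : ∀ i : Fin k, (σ i : ℕ) ≤ (i : ℕ) + 1) :
    Equiv.Perm.sign σ =
      (-1) ^ (Finset.univ.filter (fun i : Fin k => (σ i : ℕ) = (i : ℕ) + 1)).card := by
  exact main_aux _ k σ hσ rfl
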